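/- arXiv:1801.09481 — 2 statements merged into one kernel-verified Lean document; each statement's English description precedes it below -/
import Mathlib

section
/- Let C ⊆ 𝔽₂^n be a binary linear code and i ≠ j two coordinates. For every z ∈ {0,1}^n, if C^{ij}_{01}(z) ≠ ∅ and C^{ij}_{10}(z) ≠ ∅ then C^{ij}_{11}(z) ≠ ∅, and likewise for any two of the three sets C^{ij}_{01}(z), C^{ij}_{10}(z), C^{ij}_{11}(z) being nonempty the third is nonempty. Consequently, the five sets B_1^{ij}, B_2^{ij}, B_3^{ij}, B_4^{ij}, B_5^{ij} form a partition of {0,1}^n. -/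
open scoped Classical
open Finset

noncomputable section

/-- Vectors in 𝔽₂^n (codewords and binary patterns). -/
abbrev Pattern (n : ℕ) := Fin n → ZMod 2

/-- `z` covers `x` if the support of `x` is contained in the support of `z`. -/
def covers {n : ℕ} (z x : Pattern n) : Prop := ∀ k, x k ≠ 0 → z k ≠ 0

/-- C^{ij}_{ab}(z): codewords c ∈ C with (c_i, c_j) = (a, b) covered by z. -/
def Cab {n : ℕ} (C : Submodule (ZMod 2) (Pattern n)) (i j : Fin n) (a b : ZMod 2)
    (z : Pattern n) : Set (Pattern n) :=
  {c | c ∈ C ∧ c i = a ∧ c j = b ∧ covers z c}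

def B1 {n : ℕ} (C : Submodule (ZMod 2) (Pattern n)) (i j : Fin n) : Set (Pattern n) :=
  {z | Cab C i j 0 1 z = ∅ ∧ Cab C i j 1 0 z = ∅ ∧ Cab C i j 1 1 z = ∅}

def B2 {n : ℕ} (C : Submodule (ZMod 2) (Pattern n)) (i j : Fin n) : Set (Pattern n) :=
  {z | Cab C i j 0 1 z ≠ ∅ ∧ Cab C i j 1 0 z = ∅ ∧ Cab C i j 1 1 z = ∅}

def B3 {n : ℕ} (C : Submodule (ZMod 2) (Pattern n)) (i j : Fin n) : Set (Pattern n) :=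
  {z | Cab C i j 1 0 z ≠ ∅ ∧ Cab C i j 0 1 z = ∅ ∧ Cab C i j 1 1 z = ∅}

def B4 {n : ℕ} (C : Submodule (ZMod 2) (Pattern n)) (i j : Fin n) : Set (Pattern n) :=
  {z | Cab C i j 1 1 z ≠ ∅ ∧ Cab C i j 0 1 z = ∅ ∧ Cab C i j 1 0 z = ∅}

def B5 {n : ℕ} (C : Submodule (ZMod 2) (Pattern n)) (i j : Fin n) : Set (Pattern n) :=
  {z | Cab C i j 0 1 z ≠ ∅ ∧ Cab C i j 1 0 z ≠ ∅ ∧ Cab C i j 1 1 z ≠ ∅}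

lemma add_mem_Cab {n : ℕ} {C : Submodule (ZMod 2) (Pattern n)} {i j : Fin n}
    {a b a' b' : ZMod 2} {z c d : Pattern n}
    (hc : c ∈ Cab C i j a b z) (hd : d ∈ Cab C i j a' b' z) :
    c + d ∈ Cab C i j (a + a') (b + b') z := by
  obtain ⟨hcC, hci, hcj, hcz⟩ := hc
  obtain ⟨hdC, hdi, hdj, hdz⟩ := hd
  refine ⟨C.add_mem hcC hdC, by simp [hci, hdi], by simp [hcj, hdj], ?_⟩
  intro k hk
  by_cases h : c k = 0
  · exact hdz k (by simpa [h] using hk)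
  · exact hcz k h

lemma Cab_closed {n : ℕ} (C : Submodule (ZMod 2) (Pattern n)) (i j : Fin n) (z : Pattern n) :
    (Cab C i j 0 1 z ≠ ∅ → Cab C i j 1 0 z ≠ ∅ → Cab C i j 1 1 z ≠ ∅) ∧
    (Cab C i j 0 1 z ≠ ∅ → Cab C i j 1 1 z ≠ ∅ → Cab C i j 1 0 z ≠ ∅) ∧
    (Cab C i j 1 0 z ≠ ∅ → Cab C i j 1 1 z ≠ ∅ → Cab C i j 0 1 z ≠ ∅) := by
  simp only [← Set.nonempty_iff_ne_empty]
  refine ⟨?_, ?_, ?_⟩ <;> rintro ⟨c, hc⟩ ⟨d, hd⟩ <;>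
    exact ⟨c + d, by simpa [show (1 : ZMod 2) + 1 = 0 by decide] using add_mem_Cab hc hd⟩

theorem Bsets_partition (n : ℕ) (C : Submodule (ZMod 2) (Pattern n))
    (i j : Fin n) (hij : i ≠ j) :
    (∀ z : Pattern n,
      (Cab C i j 0 1 z ≠ ∅ → Cab C i j 1 0 z ≠ ∅ → Cab C i j 1 1 z ≠ ∅) ∧
      (Cab C i j 0 1 z ≠ ∅ → Cab C i j 1 1 z ≠ ∅ → Cab C i j 1 0 z ≠ ∅) ∧
      (Cab C i j 1 0 z ≠ ∅ → Cab C i j 1 1 z ≠ ∅ → Cab C i j 0 1 z ≠ ∅)) ∧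
    (∀ z : Pattern n,
      ∃! k : Fin 5, z ∈ ![B1 C i j, B2 C i j, B3 C i j, B4 C i j, B5 C i j] k) := by
  refine ⟨fun z => Cab_closed C i j z, fun z => ?_⟩
  obtain ⟨h1, h2, h3⟩ := Cab_closed C i j z
  by_cases hP : Cab C i j 0 1 z = ∅ <;>
  by_cases hQ : Cab C i j 1 0 z = ∅ <;>
  by_cases hR : Cab C i j 1 1 z = ∅
  · exact ⟨0, ⟨hP, hQ, hR⟩, by
      intro k' hk'; fin_cases k' <;> simp_all [B1, B2, B3, B4, B5]⟩
  · exact ⟨3, ⟨hR, hP, hQ⟩, by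
      intro k' hk'; fin_cases k' <;> simp_all [B1, B2, B3, B4, B5]⟩
  · exact ⟨2, ⟨hQ, hP, hR⟩, by
      intro k' hk'; fin_cases k' <;> simp_all [B1, B2, B3, B4, B5]⟩
  · exact absurd hP (h3 hQ hR)
  · exact ⟨1, ⟨hP, hQ, hR⟩, by
      intro k' hk'; fin_cases k' <;> simp_all [B1, B2, B3, B4, B5]⟩
  · exact absurd hQ (h2 hP hR)
  · exact absurd hR (h1 hP hQ)
  · exact ⟨4, ⟨hP, hQ, hR⟩, by
      intro k' hk'; fin_cases k' <;> simp_all [B1, B2, B3, B4, B5]⟩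

end
end

section
/- Let C ⊆ 𝔽₂^n be a binary linear code and i ≠ j two coordinates. Set Ω^{ij} = B_2^{ij} ∪ B_3^{ij} ∪ B_4^{ij} ∪ B_5^{ij} and D^{ij} = B_2^{ij} ∪ B_3^{ij} ∪ B_4^{ij}, and let ∂Ω^{ij} = {z ∈ Ω^{ij} : ∃ z' ∉ Ω^{ij} with d_H(z,z') = 1} be the boundary of Ω^{ij}. Then ∂Ω^{ij} ⊆ D^{ij}; equivalently, every z ∈ B_5^{ij} has all of its Hamming-distance-1 neighbors in Ω^{ij}. -/
open scoped Classical
open Finset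

noncomputable section

/-- Ω^{ij} = B₂ ∪ B₃ ∪ B₄ ∪ B₅. -/
def OmIJ {n : ℕ} (C : Submodule (ZMod 2) (Pattern n)) (i j : Fin n) : Set (Pattern n) :=
  B2 C i j ∪ B3 C i j ∪ B4 C i j ∪ B5 C i j

/-- D^{ij} = B₂ ∪ B₃ ∪ B₄. -/
def DIJ {n : ℕ} (C : Submodule (ZMod 2) (Pattern n)) (i j : Fin n) : Set (Pattern n) :=
  B2 C i j ∪ B3 C i j ∪ B4 C i j

/-- The boundary of Ω^{ij}. -/
def bdryOmIJ {n : ℕ} (C : Submodule (ZMod 2) (Pattern n)) (i j : Fin n) : Set (Pattern n) :=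
  {z ∈ OmIJ C i j | ∃ z', z' ∉ OmIJ C i j ∧ hammingDist z z' = 1}

lemma zmod2_cases : ∀ x : ZMod 2, x = 0 ∨ x = 1 := by decide

lemma sum_mem_Cab {n : ℕ} {C : Submodule (ZMod 2) (Pattern n)} {i j : Fin n}
    {a b a' b' : ZMod 2} {z c c' : Pattern n}
    (h : c ∈ Cab C i j a b z) (h' : c' ∈ Cab C i j a' b' z) :
    c + c' ∈ Cab C i j (a + a') (b + b') z := by
  obtain ⟨hc, hi, hj, hcov⟩ := h
  obtain ⟨hc', hi', hj', hcov'⟩ := h'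
  refine ⟨C.add_mem hc hc', by simp [hi, hi'], by simp [hj, hj'], ?_⟩
  intro k hk
  by_cases h1 : c k = 0
  · exact hcov' k (by simpa [h1] using hk)
  · exact hcov k h1

lemma mem_Om_of_ne {n : ℕ} {C : Submodule (ZMod 2) (Pattern n)} {i j : Fin n}
    {z : Pattern n}
    (h : Cab C i j 0 1 z ≠ ∅ ∨ Cab C i j 1 0 z ≠ ∅ ∨ Cab C i j 1 1 z ≠ ∅) :
    z ∈ OmIJ C i j := by
  by_cases h01 : Cab C i j 0 1 z = ∅ <;>
  by_cases h10 : Cab C i j 1 0 z = ∅ <;>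
  by_cases h11 : Cab C i j 1 1 z = ∅
  · tauto
  · exact Or.inl (Or.inr ⟨h11, h01, h10⟩)
  · exact Or.inl (Or.inl (Or.inr ⟨h10, h01, h11⟩))
  · -- 10 and 11 nonempty, 01 empty: contradiction
    exfalso
    obtain ⟨c, hc⟩ := Set.nonempty_iff_ne_empty.2 h10
    obtain ⟨c', hc'⟩ := Set.nonempty_iff_ne_empty.2 h11
    have := sum_mem_Cab hc hc'
    norm_num at this
    exact Set.eq_empty_iff_forall_notMem.1 h01 _ this
  · exact Or.inl (Or.inl (Or.inl ⟨h01, h10, h11⟩))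
  · -- 01 and 11 nonempty, 10 empty: contradiction
    exfalso
    obtain ⟨c, hc⟩ := Set.nonempty_iff_ne_empty.2 h01
    obtain ⟨c', hc'⟩ := Set.nonempty_iff_ne_empty.2 h11
    have := sum_mem_Cab hc hc'
    norm_num at this
    exact Set.eq_empty_iff_forall_notMem.1 h10 _ this
  · -- 01 and 10 nonempty, 11 empty: contradiction
    exfalso
    obtain ⟨c, hc⟩ := Set.nonempty_iff_ne_empty.2 h01
    obtain ⟨c', hc'⟩ := Set.nonempty_iff_ne_empty.2 h10
    have := sum_mem_Cab hc hc'
    norm_num at this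
    exact Set.eq_empty_iff_forall_notMem.1 h11 _ this
  · exact Or.inr ⟨h01, h10, h11⟩

lemma b5_neighbors {n : ℕ} {C : Submodule (ZMod 2) (Pattern n)} {i j : Fin n}
    {z : Pattern n} (hz : z ∈ B5 C i j) (z' : Pattern n)
    (hd : hammingDist z z' = 1) : z' ∈ OmIJ C i j := by
  obtain ⟨h01, h10, h11⟩ := hz
  obtain ⟨c01, hc01⟩ := Set.nonempty_iff_ne_empty.2 h01
  obtain ⟨c10, hc10⟩ := Set.nonempty_iff_ne_empty.2 h10
  obtain ⟨c11, hc11⟩ := Set.nonempty_iff_ne_empty.2 h11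
  rw [hammingDist, Finset.card_eq_one] at hd
  obtain ⟨k, hk⟩ := hd
  have hiff : ∀ m, z m ≠ z' m ↔ m = k := by
    intro m
    constructor
    · intro hm
      have : m ∈ ({k} : Finset (Fin n)) := hk ▸ Finset.mem_filter.2 ⟨Finset.mem_univ m, hm⟩
      exact Finset.mem_singleton.1 this
    · intro hm
      have h2 : k ∈ ({k} : Finset (Fin n)) := Finset.mem_singleton_self k
      rw [← hk, Finset.mem_filter] at h2
      rw [hm]
      exact h2.2
  have hne : z k ≠ z' k := (hiff k).2 rfl
  have heq : ∀ m, m ≠ k → z' m = z m := by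
    intro m hm
    by_contra h
    exact hm ((hiff m).1 (Ne.symm h))
  by_cases hzk : z k = 0
  · -- z' has larger support; all covers transfer
    have hz'k : z' k ≠ 0 := fun h => hne (hzk.trans h.symm)
    have trans : ∀ c : Pattern n, covers z c → covers z' c := by
      intro c hc m hm
      by_cases hmk : m = k
      · exact hmk ▸ hz'k
      · exact (heq m hmk) ▸ hc m hm
    apply mem_Om_of_ne
    exact Or.inl (Set.nonempty_iff_ne_empty.1
      ⟨c01, hc01.1, hc01.2.1, hc01.2.2.1, trans _ hc01.2.2.2⟩)
  · -- z k = 1, z' k = 0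
    have hz'k : z' k = 0 := by
      rcases zmod2_cases (z' k) with h | h
      · exact h
      · rcases zmod2_cases (z k) with h' | h'
        · exact absurd h' hzk
        · exact absurd (h'.trans h.symm) hne
    have trans : ∀ c : Pattern n, covers z c → c k = 0 → covers z' c := by
      intro c hc hck m hm
      by_cases hmk : m = k
      · exact absurd (hmk ▸ hck) hm
      · exact (heq m hmk) ▸ hc m hm
    apply mem_Om_of_ne
    by_cases h01k : c01 k = 0
    · exact Or.inl (Set.nonempty_iff_ne_empty.1
        ⟨c01, hc01.1, hc01.2.1, hc01.2.2.1, trans _ hc01.2.2.2 h01k⟩)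
    by_cases h10k : c10 k = 0
    · exact Or.inr (Or.inl (Set.nonempty_iff_ne_empty.1
        ⟨c10, hc10.1, hc10.2.1, hc10.2.2.1, trans _ hc10.2.2.2 h10k⟩))
    by_cases h11k : c11 k = 0
    · exact Or.inr (Or.inr (Set.nonempty_iff_ne_empty.1
        ⟨c11, hc11.1, hc11.2.1, hc11.2.2.1, trans _ hc11.2.2.2 h11k⟩))
    · -- all have 1 at k; use c01 + c10
      have hsum := sum_mem_Cab hc01 hc10
      norm_num at hsum
      have hsumk : (c01 + c10) k = 0 := by
        rcases zmod2_cases (c01 k) with h | h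
        · exact absurd h h01k
        · rcases zmod2_cases (c10 k) with h' | h'
          · exact absurd h' h10k
          · show c01 k + c10 k = 0
            rw [h, h']
            decide
      exact Or.inr (Or.inr (Set.nonempty_iff_ne_empty.1
        ⟨c01 + c10, hsum.1, hsum.2.1, hsum.2.2.1, trans _ hsum.2.2.2 hsumk⟩))

theorem boundary_subset_D (n : ℕ) (C : Submodule (ZMod 2) (Pattern n))
    (i j : Fin n) (hij : i ≠ j) :
    bdryOmIJ C i j ⊆ DIJ C i j ∧
    ∀ z ∈ B5 C i j, ∀ z' : Pattern n, hammingDist z z' = 1 → z' ∈ OmIJ C i j := by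
  constructor
  · rintro z ⟨hzOm, z', hz'n, hdist⟩
    rcases hzOm with ((h | h) | h) | h
    · exact Or.inl (Or.inl h)
    · exact Or.inl (Or.inr h)
    · exact Or.inr h
    · exact absurd (b5_neighbors h z' hdist) hz'n
  · intro z hz z' hd
    exact b5_neighbors hz z' hd

end
end
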